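/- Let $M_n$ be the $n\times n$ real symmetric matrix with entries $M_n(j,k) = \frac{1}{\sqrt{2\pi}}\,\frac{\Gamma(j+k-3/2)}{\sqrt{\Gamma(2j-1)\Gamma(2k-1)}}$ for $1\le j,k\le n$. Then for all positive integers $m$ and $n$, $\mathrm{Tr}(M_n^m) = \left(\frac{1}{2\pi}\right)^{m/2} \int_{\mathbb{R}^m} e^{-\sum_{k=1}^m y_k^2}\; \prod_{l=1}^{m} \cosh_{n-1}(y_l\, y_{l+1}) \; dy_1\cdots dy_m$, where the indices are cyclic, i.e. $y_{m+1} := y_1$. -/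

import Mathlib

open Finset MeasureTheory Real

/-- The `n × n` real symmetric matrix with entries
`M_n(j,k) = Γ(j+k-3/2) / (√(2π) √(Γ(2j-1) Γ(2k-1)))` for `1 ≤ j,k ≤ n`. -/
noncomputable def ginibreM (n : ℕ) : Matrix (Fin n) (Fin n) ℝ :=
  Matrix.of fun j k =>
    (1 / Real.sqrt (2 * Real.pi)) *
      Real.Gamma (((j : ℕ) + 1 : ℝ) + ((k : ℕ) + 1 : ℝ) - 3 / 2) /
        Real.sqrt (Real.Gamma (2 * ((j : ℕ) + 1 : ℝ) - 1) *
          Real.Gamma (2 * ((k : ℕ) + 1 : ℝ) - 1))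

/-- `cosh_n(x) = ∑_{k=0}^{n} x^(2k)/(2k)!`, the degree-`2n` Taylor polynomial of `cosh`. -/
noncomputable def coshPoly (n : ℕ) (x : ℝ) : ℝ :=
  ∑ k ∈ Finset.range (n + 1), x ^ (2 * k) / (Nat.factorial (2 * k) : ℝ)

lemma ginibre_entry_eq {N : ℕ} (j k : Fin N) :
    ginibreM N j k = (Real.sqrt (2 * Real.pi))⁻¹ *
      Real.Gamma (((j : ℕ) : ℝ) + ((k : ℕ) : ℝ) + 1 / 2) *
      ((Real.sqrt ((2 * (j : ℕ)).factorial))⁻¹ *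
        (Real.sqrt ((2 * (k : ℕ)).factorial))⁻¹) := by
  have hj : Real.Gamma (2 * (((j : ℕ) : ℝ) + 1) - 1) = ((2 * (j : ℕ)).factorial : ℝ) := by
    rw [show (2 * (((j : ℕ) : ℝ) + 1) - 1) = ((2 * (j : ℕ) : ℕ) : ℝ) + 1 by push_cast; ring,
      Real.Gamma_nat_eq_factorial]
  have hk : Real.Gamma (2 * (((k : ℕ) : ℝ) + 1) - 1) = ((2 * (k : ℕ)).factorial : ℝ) := by
    rw [show (2 * (((k : ℕ) : ℝ) + 1) - 1) = ((2 * (k : ℕ) : ℕ) : ℝ) + 1 by push_cast; ring,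
      Real.Gamma_nat_eq_factorial]
  show (1 / Real.sqrt (2 * Real.pi)) *
      Real.Gamma ((((j : ℕ) : ℝ) + 1) + (((k : ℕ) : ℝ) + 1) - 3 / 2) /
        Real.sqrt (Real.Gamma (2 * (((j : ℕ) : ℝ) + 1) - 1) *
          Real.Gamma (2 * (((k : ℕ) : ℝ) + 1) - 1)) = _
  rw [hj, hk,
    show ((((j : ℕ) : ℝ) + 1) + (((k : ℕ) : ℝ) + 1) - 3 / 2)
      = ((j : ℕ) : ℝ) + ((k : ℕ) : ℝ) + 1 / 2 by ring,
    Real.sqrt_mul (by positivity : (0:ℝ) ≤ ((2 * (j : ℕ)).factorial : ℝ)) (((2 * (k : ℕ)).factorial : ℝ)), div_eq_mul_inv, mul_inv, one_div]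

lemma pref_eq (m : ℕ) :
    ((1 : ℝ) / (2 * Real.pi)) ^ ((m : ℝ) / 2) = ((Real.sqrt (2 * Real.pi))⁻¹) ^ m := by
  have h2π : (0 : ℝ) < 2 * Real.pi := by positivity
  have h1 : (Real.sqrt (2 * Real.pi))⁻¹ = ((1 : ℝ) / (2 * Real.pi)) ^ (1 / 2 : ℝ) := by
    rw [one_div, Real.inv_rpow h2π.le, ← Real.sqrt_eq_rpow]
  rw [h1, ← Real.rpow_natCast (((1 : ℝ) / (2 * Real.pi)) ^ (1 / 2 : ℝ)) m,
    ← Real.rpow_mul (by positivity)]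
  congr 1
  ring

section shifts

variable {m : ℕ}

lemma shift_prod {M : Type*} [CommMonoid M] (f : Fin (m + 1) → M) :
    ∏ l : Fin (m + 1), f (l + 1) = ∏ l : Fin (m + 1), f l :=
  Fintype.prod_equiv (Equiv.addRight (1 : Fin (m + 1))) _ _ fun _ => rfl

lemma shift_prod' {M : Type*} [CommMonoid M] (f : Fin (m + 1) → Fin (m + 1) → M) :
    ∏ l : Fin (m + 1), f l (l + 1) = ∏ l : Fin (m + 1), f (l - 1) l := by
  refine Fintype.prod_equiv (Equiv.addRight (1 : Fin (m + 1))) _ _ fun x => ?_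
  simp only [Equiv.coe_addRight, add_sub_cancel_right]

end shifts

lemma lhs_term_eq (m n : ℕ) (g : Fin (m + 1) → Fin n) :
    (∏ l : Fin (m + 1), ginibreM n (g l) (g (l + 1))) =
      ((Real.sqrt (2 * Real.pi))⁻¹) ^ (m + 1) *
        ((∏ l : Fin (m + 1), (((2 * (g l : ℕ)).factorial : ℝ))⁻¹) *
          ∏ l : Fin (m + 1),
            Real.Gamma ((((g (l - 1) : ℕ) + (g l : ℕ) : ℕ) : ℝ) + 1 / 2)) := by
  calc (∏ l : Fin (m + 1), ginibreM n (g l) (g (l + 1)))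
      = ∏ l : Fin (m + 1), ((Real.sqrt (2 * Real.pi))⁻¹ *
          Real.Gamma (((g l : ℕ) : ℝ) + ((g (l + 1) : ℕ) : ℝ) + 1 / 2) *
          ((Real.sqrt ((2 * (g l : ℕ)).factorial))⁻¹ *
            (Real.sqrt ((2 * (g (l + 1) : ℕ)).factorial))⁻¹)) :=
        Finset.prod_congr rfl fun l _ => ginibre_entry_eq _ _
    _ = ((∏ _l : Fin (m + 1), (Real.sqrt (2 * Real.pi))⁻¹) *
          ∏ l : Fin (m + 1),
            Real.Gamma (((g l : ℕ) : ℝ) + ((g (l + 1) : ℕ) : ℝ) + 1 / 2)) *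
          ((∏ l : Fin (m + 1), (Real.sqrt ((2 * (g l : ℕ)).factorial))⁻¹) *
            ∏ l : Fin (m + 1), (Real.sqrt ((2 * (g (l + 1) : ℕ)).factorial))⁻¹) := by
        rw [Finset.prod_mul_distrib, Finset.prod_mul_distrib, Finset.prod_mul_distrib]
    _ = _ := by
        rw [Finset.prod_const, Finset.card_univ, Fintype.card_fin]
        rw [shift_prod (fun l => (Real.sqrt ((2 * (g l : ℕ)).factorial))⁻¹)]
        rw [show (∏ l : Fin (m + 1),
            Real.Gamma (((g l : ℕ) : ℝ) + ((g (l + 1) : ℕ) : ℝ) + 1 / 2)) =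
          ∏ l : Fin (m + 1),
            Real.Gamma ((((g (l - 1) : ℕ) + (g l : ℕ) : ℕ) : ℝ) + 1 / 2) from
          (shift_prod' (fun a b =>
            Real.Gamma (((g a : ℕ) : ℝ) + ((g b : ℕ) : ℝ) + 1 / 2))).trans
            (Finset.prod_congr rfl fun l _ => by push_cast; ring_nf)]
        rw [show ((∏ l : Fin (m + 1), (Real.sqrt ((2 * (g l : ℕ)).factorial))⁻¹) *
            ∏ l : Fin (m + 1), (Real.sqrt ((2 * (g l : ℕ)).factorial))⁻¹) =
          ∏ l : Fin (m + 1), (((2 * (g l : ℕ)).factorial : ℝ))⁻¹ from by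
          rw [← Finset.prod_mul_distrib]
          refine Finset.prod_congr rfl fun l _ => ?_
          rw [← mul_inv, Real.mul_self_sqrt (by positivity)]]
        ring

lemma integrand_eq (m n' : ℕ) (y : Fin (m + 1) → ℝ) :
    Real.exp (-∑ k : Fin (m + 1), y k ^ 2) *
        ∏ l : Fin (m + 1), coshPoly n' (y l * y (l + 1)) =
      ∑ g : Fin (m + 1) → Fin (n' + 1),
        (∏ l : Fin (m + 1), (((2 * (g l : ℕ)).factorial : ℝ))⁻¹) *
          ∏ l : Fin (m + 1),
            (y l ^ (2 * ((g (l - 1) : ℕ) + (g l : ℕ))) * Real.exp (-(y l) ^ 2)) := by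
  have hcosh : ∀ x : ℝ, coshPoly n' x =
      ∑ k : Fin (n' + 1), x ^ (2 * (k : ℕ)) / (((2 * (k : ℕ)).factorial : ℝ)) := by
    intro x
    rw [coshPoly]
    exact (Fin.sum_univ_eq_sum_range (fun k => x ^ (2 * k) / (((2 * k).factorial : ℝ)))
      (n' + 1)).symm
  have hexp : Real.exp (-∑ k : Fin (m + 1), y k ^ 2)
      = ∏ l : Fin (m + 1), Real.exp (-(y l) ^ 2) := by
    rw [← Real.exp_sum]
    congr 1
    rw [← Finset.sum_neg_distrib]
  rw [hexp, ← Finset.prod_mul_distrib]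
  simp_rw [hcosh, Finset.mul_sum]
  rw [Fintype.prod_sum]
  refine Finset.sum_congr rfl fun g _ => ?_
  have shift : (∏ l : Fin (m + 1), y (l + 1) ^ (2 * (g l : ℕ))) =
      ∏ l : Fin (m + 1), y l ^ (2 * ((g (l - 1) : ℕ))) :=
    shift_prod' (fun a b => y b ^ (2 * (g a : ℕ)))
  have hrhs : (∏ l : Fin (m + 1),
      (y l ^ (2 * ((g (l - 1) : ℕ) + (g l : ℕ))) * Real.exp (-(y l) ^ 2))) =
      (∏ l : Fin (m + 1), y l ^ (2 * ((g (l - 1) : ℕ)))) *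
        ((∏ l : Fin (m + 1), y l ^ (2 * (g l : ℕ))) *
          ∏ l : Fin (m + 1), Real.exp (-(y l) ^ 2)) := by
    rw [← Finset.prod_mul_distrib, ← Finset.prod_mul_distrib]
    refine Finset.prod_congr rfl fun l _ => ?_
    rw [mul_add, pow_add, mul_assoc]
  rw [hrhs]
  simp only [div_eq_mul_inv, mul_pow]
  rw [Finset.prod_mul_distrib, Finset.prod_mul_distrib, Finset.prod_mul_distrib, shift]
  ring

open Finset

variable {R : Type*} [CommSemiring R] {n : ℕ}

lemma sum_snoc' {β M : Type*} [Fintype β] [AddCommMonoid M] (k : ℕ)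
    (g : (Fin (k + 1) → β) → M) :
    ∑ c : Fin (k + 1) → β, g c = ∑ p : β × (Fin k → β), g (Fin.snoc p.2 p.1) := by
  rw [← (Fin.snocEquiv (fun _ => β)).sum_comp g]
  rfl

lemma snoc_prod_eq (A : Matrix (Fin n) (Fin n) R) (m : ℕ) (c : Fin (m + 1) → Fin n)
    (k : Fin n) :
    (∏ l : Fin (m + 1), A ((Fin.snoc c k : Fin (m + 2) → Fin n) l.castSucc)
        ((Fin.snoc c k : Fin (m + 2) → Fin n) l.succ)) =
      (∏ l : Fin m, A (c l.castSucc) (c l.succ)) * A (c (Fin.last m)) k := by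
  rw [Fin.prod_univ_castSucc]
  congr 1
  · exact Finset.prod_congr rfl fun l _ => by
      rw [Fin.succ_castSucc, Fin.snoc_castSucc, Fin.snoc_castSucc]
  · rw [Fin.succ_last, Fin.snoc_last, Fin.snoc_castSucc]

lemma snoc_zero' {β : Type*} (m : ℕ) (c : Fin (m + 1) → β) (k : β) :
    (Fin.snoc c k : Fin (m + 2) → β) 0 = c 0 := by
  rw [show (0 : Fin (m + 2)) = Fin.castSucc 0 by rfl, Fin.snoc_castSucc]

lemma pow_apply_path (A : Matrix (Fin n) (Fin n) R) (m : ℕ) (i j : Fin n) :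
    (A ^ m) i j = ∑ c : Fin (m + 1) → Fin n,
      if c 0 = i ∧ c (Fin.last m) = j then
        ∏ l : Fin m, A (c l.castSucc) (c l.succ) else 0 := by
  induction m generalizing j with
  | zero =>
    rw [pow_zero, Matrix.one_apply]
    rw [← (Equiv.funUnique (Fin 1) (Fin n)).symm.sum_comp]
    have hx : ∀ (x : Fin n) (t : Fin 1),
        (Equiv.funUnique (Fin 1) (Fin n)).symm x t = x := fun _ _ => rfl
    simp only [hx, Fin.prod_univ_zero]
    by_cases hij : i = j
    · subst hij
      simp only [and_self, if_pos rfl]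
      rw [Finset.sum_ite_eq' Finset.univ i (fun _ => (1 : R))]
      simp
    · rw [if_neg hij]
      symm
      refine Finset.sum_eq_zero fun x _ => ?_
      rw [if_neg]
      rintro ⟨rfl, h2⟩
      exact hij h2
  | succ m ih =>
    rw [pow_succ, Matrix.mul_apply]
    have hL : (∑ t : Fin n, (A ^ m) i t * A t j) =
        ∑ c : Fin (m + 1) → Fin n,
          if c 0 = i then
            (∏ l : Fin m, A (c l.castSucc) (c l.succ)) * A (c (Fin.last m)) j else 0 := by
      calc (∑ t : Fin n, (A ^ m) i t * A t j)
          = ∑ t : Fin n, ∑ c : Fin (m + 1) → Fin n,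
              if c 0 = i ∧ c (Fin.last m) = t then
                (∏ l : Fin m, A (c l.castSucc) (c l.succ)) * A t j else 0 := by
            refine Finset.sum_congr rfl fun t _ => ?_
            rw [ih, Finset.sum_mul]
            exact Finset.sum_congr rfl fun c _ => by rw [ite_mul, zero_mul]
        _ = ∑ c : Fin (m + 1) → Fin n, ∑ t : Fin n,
              if c 0 = i ∧ c (Fin.last m) = t then
                (∏ l : Fin m, A (c l.castSucc) (c l.succ)) * A t j else 0 :=
            Finset.sum_comm
        _ = _ := by
            refine Finset.sum_congr rfl fun c _ => ?_
            by_cases h : c 0 = i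
            · simp [h, Finset.sum_ite_eq]
            · simp [h]
    rw [hL]
    symm
    rw [sum_snoc' (m + 1) (fun (c : Fin (m + 2) → Fin n) =>
        if c 0 = i ∧ c (Fin.last (m + 1)) = j then
          ∏ l : Fin (m + 1), A (c l.castSucc) (c l.succ) else 0)]
    rw [Fintype.sum_prod_type, Finset.sum_comm]
    refine Finset.sum_congr rfl fun c _ => ?_
    have step2 : ∀ k : Fin n,
        (if (Fin.snoc c k : Fin (m + 2) → Fin n) 0 = i ∧
            (Fin.snoc c k : Fin (m + 2) → Fin n) (Fin.last (m + 1)) = j then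
          ∏ l : Fin (m + 1), A ((Fin.snoc c k : Fin (m + 2) → Fin n) l.castSucc)
            ((Fin.snoc c k : Fin (m + 2) → Fin n) l.succ) else 0) =
        if c 0 = i ∧ k = j then
          (∏ l : Fin m, A (c l.castSucc) (c l.succ)) * A (c (Fin.last m)) k else 0 := by
      intro k
      rw [snoc_zero', Fin.snoc_last, snoc_prod_eq]
    simp_rw [step2, ite_and]
    by_cases h : c 0 = i
    · simp [h, Finset.sum_ite_eq']
    · simp [h]

lemma trace_pow_path (A : Matrix (Fin n) (Fin n) R) (m : ℕ) :
    Matrix.trace (A ^ (m + 1)) =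
      ∑ d : Fin (m + 1) → Fin n, ∏ l : Fin (m + 1), A (d l) (d (l + 1)) := by
  rw [Matrix.trace]
  have hdiag : ∀ i : Fin n, Matrix.diag (A ^ (m + 1)) i =
      ∑ c : Fin (m + 2) → Fin n,
        if c 0 = i ∧ c (Fin.last (m + 1)) = i then
          ∏ l : Fin (m + 1), A (c l.castSucc) (c l.succ) else 0 := fun i =>
    pow_apply_path A (m + 1) i i
  calc (∑ i : Fin n, Matrix.diag (A ^ (m + 1)) i)
      = ∑ c : Fin (m + 2) → Fin n, ∑ i : Fin n,
          if c 0 = i ∧ c (Fin.last (m + 1)) = i then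
            ∏ l : Fin (m + 1), A (c l.castSucc) (c l.succ) else 0 := by
        rw [← Finset.sum_comm]
        exact Finset.sum_congr rfl fun i _ => hdiag i
    _ = ∑ c : Fin (m + 2) → Fin n,
          if c (Fin.last (m + 1)) = c 0 then
            ∏ l : Fin (m + 1), A (c l.castSucc) (c l.succ) else 0 := by
        refine Finset.sum_congr rfl fun c _ => ?_
        simp_rw [ite_and]
        rw [Finset.sum_ite_eq]
        simp
    _ = ∑ d : Fin (m + 1) → Fin n, ∏ l : Fin (m + 1), A (d l) (d (l + 1)) := by
        rw [sum_snoc' (m + 1) (fun (c : Fin (m + 2) → Fin n) =>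
            if c (Fin.last (m + 1)) = c 0 then
              ∏ l : Fin (m + 1), A (c l.castSucc) (c l.succ) else 0)]
        rw [Fintype.sum_prod_type, Finset.sum_comm]
        refine Finset.sum_congr rfl fun d _ => ?_
        have step2 : ∀ k : Fin n,
            (if (Fin.snoc d k : Fin (m + 2) → Fin n) (Fin.last (m + 1)) =
                (Fin.snoc d k : Fin (m + 2) → Fin n) 0 then
              ∏ l : Fin (m + 1), A ((Fin.snoc d k : Fin (m + 2) → Fin n) l.castSucc)
                ((Fin.snoc d k : Fin (m + 2) → Fin n) l.succ) else 0) =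
            if k = d 0 then
              (∏ l : Fin m, A (d l.castSucc) (d l.succ)) * A (d (Fin.last m)) k else 0 := by
          intro k
          rw [Fin.snoc_last, snoc_zero', snoc_prod_eq]
        simp_rw [step2]
        rw [Finset.sum_ite_eq' Finset.univ (d 0)]
        simp only [Finset.mem_univ, if_true]
        rw [Fin.prod_univ_castSucc]
        congr 1
        · refine Finset.prod_congr rfl fun l _ => ?_
          congr 1
          have h1 : l.castSucc + 1 = l.succ := by
            ext
            rw [Fin.val_add_one]
            simp [(Fin.castSucc_lt_last l).ne]
          rw [h1]
        · congr 1
          have h2 : Fin.last m + 1 = 0 := by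
            ext
            rw [Fin.val_add_one]
            simp
          rw [h2]

lemma gauss_mom_integrable (p : ℕ) :
    Integrable (fun x : ℝ => x ^ (2 * p) * Real.exp (-x ^ 2)) := by
  have h := integrable_rpow_mul_exp_neg_mul_sq (b := 1) one_pos
    (s := ((2 * p : ℕ) : ℝ)) (lt_of_lt_of_le neg_one_lt_zero (by positivity))
  have he : ∀ x : ℝ, x ^ ((2 * p : ℕ) : ℝ) * Real.exp (-1 * x ^ 2)
      = x ^ (2 * p) * Real.exp (-x ^ 2) := by
    intro x
    rw [Real.rpow_natCast, neg_mul, one_mul]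
  simpa only [he] using h

lemma gauss_mom (p : ℕ) :
    ∫ x : ℝ, x ^ (2 * p) * Real.exp (-x ^ 2) = Real.Gamma ((p : ℝ) + 1 / 2) := by
  have hf : ∀ x : ℝ, |x| ^ (2 * p) * Real.exp (-|x| ^ 2)
      = x ^ (2 * p) * Real.exp (-x ^ 2) := by
    intro x
    rw [pow_mul, pow_mul, sq_abs]
  have habs := integral_comp_abs
    (f := fun x : ℝ => x ^ (2 * p) * Real.exp (-x ^ 2))
  simp_rw [hf] at habs
  rw [habs]
  have h2 := integral_rpow_mul_exp_neg_rpow (p := 2) (q := ((2 * p : ℕ) : ℝ))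
    two_pos (lt_of_lt_of_le neg_one_lt_zero (by positivity))
  have he : ∀ x : ℝ, x ^ ((2 * p : ℕ) : ℝ) * Real.exp (-x ^ (2 : ℝ))
      = x ^ (2 * p) * Real.exp (-x ^ 2) := by
    intro x
    rw [Real.rpow_natCast, Real.rpow_two]
  simp_rw [he] at h2
  rw [h2]
  rw [show (((2 * p : ℕ) : ℝ) + 1) / 2 = (p : ℝ) + 1 / 2 by push_cast; ring]
  ring

theorem stmt9 (m n : ℕ) (hm : 0 < m) (hn : 0 < n) :
    Matrix.trace (ginibreM n ^ m) =
      (1 / (2 * Real.pi)) ^ ((m : ℝ) / 2) *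
        ∫ y : Fin m → ℝ,
          Real.exp (-∑ k : Fin m, (y k) ^ 2) *
            ∏ l : Fin m, coshPoly (n - 1) (y l * y (l + ⟨1 % m, Nat.mod_lt 1 hm⟩)) := by
  obtain ⟨m', rfl⟩ : ∃ m', m = m' + 1 := ⟨m - 1, by omega⟩
  obtain ⟨n', rfl⟩ : ∃ n', n = n' + 1 := ⟨n - 1, by omega⟩
  have hone : (⟨1 % (m' + 1), Nat.mod_lt 1 hm⟩ : Fin (m' + 1)) = 1 := by
    ext
    simp [Fin.val_one']
  simp only [hone, Nat.add_sub_cancel]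
  have hInt : ∀ g : Fin (m' + 1) → Fin (n' + 1),
      Integrable (fun y : Fin (m' + 1) → ℝ =>
        (∏ l : Fin (m' + 1), (((2 * (g l : ℕ)).factorial : ℝ))⁻¹) *
          ∏ l : Fin (m' + 1),
            (y l ^ (2 * ((g (l - 1) : ℕ) + (g l : ℕ))) * Real.exp (-(y l) ^ 2))) := by
    intro g
    exact (Integrable.fintype_prod (𝕜 := ℝ)
      (f := fun l x => x ^ (2 * ((g (l - 1) : ℕ) + (g l : ℕ))) * Real.exp (-x ^ 2))
      (fun l => gauss_mom_integrable _)).const_mul _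
  have hRHS : (∫ y : Fin (m' + 1) → ℝ,
      Real.exp (-∑ k : Fin (m' + 1), y k ^ 2) *
        ∏ l : Fin (m' + 1), coshPoly n' (y l * y (l + 1))) =
      ∑ g : Fin (m' + 1) → Fin (n' + 1),
        (∏ l : Fin (m' + 1), (((2 * (g l : ℕ)).factorial : ℝ))⁻¹) *
          ∏ l : Fin (m' + 1),
            Real.Gamma ((((g (l - 1) : ℕ) + (g l : ℕ) : ℕ) : ℝ) + 1 / 2) := by
    calc (∫ y : Fin (m' + 1) → ℝ,
        Real.exp (-∑ k : Fin (m' + 1), y k ^ 2) *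
          ∏ l : Fin (m' + 1), coshPoly n' (y l * y (l + 1)))
        = ∫ y : Fin (m' + 1) → ℝ, ∑ g : Fin (m' + 1) → Fin (n' + 1),
            (∏ l : Fin (m' + 1), (((2 * (g l : ℕ)).factorial : ℝ))⁻¹) *
              ∏ l : Fin (m' + 1),
                (y l ^ (2 * ((g (l - 1) : ℕ) + (g l : ℕ))) * Real.exp (-(y l) ^ 2)) := by
          congr 1
          funext y
          exact integrand_eq m' n' y
      _ = ∑ g : Fin (m' + 1) → Fin (n' + 1), ∫ y : Fin (m' + 1) → ℝ,
            (∏ l : Fin (m' + 1), (((2 * (g l : ℕ)).factorial : ℝ))⁻¹) *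
              ∏ l : Fin (m' + 1),
                (y l ^ (2 * ((g (l - 1) : ℕ) + (g l : ℕ))) * Real.exp (-(y l) ^ 2)) :=
          integral_finset_sum Finset.univ (fun g _ => hInt g)
      _ = _ := by
          refine Finset.sum_congr rfl fun g _ => ?_
          rw [integral_const_mul]
          congr 1
          rw [integral_fintype_prod_volume_eq_prod (ι := Fin (m' + 1))
            (f := fun l x => x ^ (2 * ((g (l - 1) : ℕ) + (g l : ℕ))) * Real.exp (-x ^ 2))]
          exact Finset.prod_congr rfl fun l _ => gauss_mom _
  rw [hRHS, trace_pow_path, pref_eq (m' + 1), Finset.mul_sum]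
  refine Finset.sum_congr rfl fun g _ => ?_
  rw [lhs_term_eq]
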